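/- Let δ: ℝ → ℝ be convex and differentiable with nondecreasing derivative, let h₁, …, h_m ∈ ℝ, and consider minimizing Σᵢ δ(Rᵢ − hᵢ) over Rᵢ ≥ 0 with Σᵢ Rᵢ = R_sum > 0. Then an optimal solution is given by the water-filling allocation Rᵢ* = max(μ + hᵢ, 0), where μ is chosen so that Σᵢ Rᵢ* = R_sum. -/
import Mathlib


open Finset

lemma tangent_le (δ : ℝ → ℝ) (hconv : ConvexOn ℝ Set.univ δ)
    (hdiff : Differentiable ℝ δ) (x y : ℝ) :
    δ x + deriv δ x * (y - x) ≤ δ y := by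
  rcases lt_trichotomy x y with hxy | rfl | hxy
  · have := hconv.deriv_le_slope (Set.mem_univ x) (Set.mem_univ y) hxy
      (hdiff x)
    rw [slope_def_field] at this
    have h1 : deriv δ x * (y - x) ≤ (δ y - δ x) / (y - x) * (y - x) := by
      apply mul_le_mul_of_nonneg_right this (by linarith)
    rw [div_mul_cancel₀ _ (by linarith : y - x ≠ 0)] at h1
    linarith
  · simp
  · have := hconv.slope_le_deriv (Set.mem_univ y) (Set.mem_univ x) hxy
      (hdiff x)
    rw [slope_def_field] at this
    have h1 : (δ x - δ y) / (x - y) * (x - y) ≤ deriv δ x * (x - y) := by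
      apply mul_le_mul_of_nonneg_right this (by linarith)
    rw [div_mul_cancel₀ _ (by linarith : x - y ≠ 0)] at h1
    linarith

theorem waterfilling_optimal (m : ℕ) (δ : ℝ → ℝ)
    (hconv : ConvexOn ℝ Set.univ δ) (hdiff : Differentiable ℝ δ)
    (hmono : Monotone (deriv δ))
    (h : Fin m → ℝ) (Rsum : ℝ) (hRsum : 0 < Rsum)
    (μ : ℝ) (hμ : ∑ i, max (μ + h i) 0 = Rsum) :
    ∀ R : Fin m → ℝ, (∀ i, 0 ≤ R i) → ∑ i, R i = Rsum →
      ∑ i, δ (max (μ + h i) 0 - h i) ≤ ∑ i, δ (R i - h i) := by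
  intro R hRnn hRs
  set c := deriv δ μ with hc
  have key : ∀ i : Fin m,
      δ (max (μ + h i) 0 - h i) + c * (R i - max (μ + h i) 0) ≤ δ (R i - h i) := by
    intro i
    set s := max (μ + h i) 0 with hs
    have tang := tangent_le δ hconv hdiff (s - h i) (R i - h i)
    have : c * (R i - s) ≤ deriv δ (s - h i) * (R i - s) := by
      rcases le_or_gt 0 (μ + h i) with hcase | hcase
      · have : s - h i = μ := by simp [hs, max_eq_left hcase]
        rw [this]
      · have hs0 : s = 0 := by simp [hs, max_eq_right hcase.le]
        have hd : c ≤ deriv δ (s - h i) := by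
          apply hmono; rw [hs0]; linarith
        have hRnn' : 0 ≤ R i - s := by rw [hs0]; simpa using hRnn i
        exact mul_le_mul_of_nonneg_right hd hRnn'
    have : δ (s - h i) + c * (R i - s) ≤ δ (s - h i) + deriv δ (s - h i) * (R i - s) := by
      linarith
    have heq : R i - h i - (s - h i) = R i - s := by ring
    rw [heq] at tang
    linarith
  calc ∑ i, δ (max (μ + h i) 0 - h i)
      = ∑ i, (δ (max (μ + h i) 0 - h i) + c * (R i - max (μ + h i) 0)) := by
        rw [Finset.sum_add_distrib, ← Finset.mul_sum, Finset.sum_sub_distrib]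
        rw [hRs, hμ]; ring
    _ ≤ ∑ i, δ (R i - h i) := Finset.sum_le_sum fun i _ => key i
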